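/- Let H be a Hopf algebra over a field k. For any left H-modules M and N, the projective dimension satisfies pd_H(M ⊗_k N) ≤ pd_H(M). If moreover the antipode of H is bijective, then also pd_H(M ⊗_k N) ≤ pd_H(N). -/

import Mathlib

open TensorProduct Coalgebra

universe u

noncomputable section



noncomputable section GorensteinCore

/-- `ProjDimLE R n M` : the left `R`-module `M` has a projective resolution of length `≤ n`. -/
def ProjDimLE (R : Type u) [Ring R] : ℕ → (M : Type u) → [AddCommGroup M] → [Module R M] → Prop
  | 0, M, _, _ => Module.Projective R M
  | (n+1), M, _, _ => Module.Projective R M ∨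
      ∃ (P : ModuleCat.{u} R) (f : P →ₗ[R] M), Module.Projective R P ∧
      Function.Surjective f ∧ ProjDimLE R n (LinearMap.ker f)

/-- The projective dimension of a module, as an element of `ℕ∞` (`⊤` = infinite). -/
def projDim (R : Type u) [Ring R] (M : Type u) [AddCommGroup M] [Module R M] : ℕ∞ :=
  sInf {n : ℕ∞ | ∃ m : ℕ, n = (m : ℕ∞) ∧ ProjDimLE R m M}

/-- A module is Gorenstein projective if it is a syzygy of a totally acyclic complex of
projective modules. -/
def IsGorensteinProjective (R : Type u) [Ring R] (M : Type u) [AddCommGroup M] [Module R M] :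
    Prop :=
  ∃ (P : ℤ → ModuleCat.{u} R) (d : ∀ i : ℤ, P (i+1) →ₗ[R] P i),
    (∀ i, Module.Projective R (P i)) ∧
    (∀ i, LinearMap.range (d (i+1)) = LinearMap.ker (d i)) ∧
    (∀ (Q : ModuleCat.{u} R), Module.Projective R Q →
      ∀ (i : ℤ) (f : P (i+1) →ₗ[R] Q), f.comp (d (i+1)) = 0 →
        ∃ g : P i →ₗ[R] Q, g.comp (d i) = f) ∧
    Nonempty (M ≃ₗ[R] LinearMap.ker (d 0))

/-- `GProjDimLE R n M` : `M` has a Gorenstein projective resolution of length `≤ n`. -/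
def GProjDimLE (R : Type u) [Ring R] : ℕ → (M : Type u) → [AddCommGroup M] → [Module R M] → Prop
  | 0, M, _, _ => IsGorensteinProjective R M
  | (n+1), M, _, _ => IsGorensteinProjective R M ∨
      ∃ (G : ModuleCat.{u} R) (f : G →ₗ[R] M), IsGorensteinProjective R G ∧
      Function.Surjective f ∧ GProjDimLE R n (LinearMap.ker f)

/-- The Gorenstein projective dimension of a module, as an element of `ℕ∞`. -/
def gProjDim (R : Type u) [Ring R] (M : Type u) [AddCommGroup M] [Module R M] : ℕ∞ :=
  sInf {n : ℕ∞ | ∃ m : ℕ, n = (m : ℕ∞) ∧ GProjDimLE R m M}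

/-- The (left) Gorenstein global dimension of a ring `R`. -/
def lGgldim (R : Type u) [Ring R] : ℕ∞ :=
  ⨆ M : ModuleCat.{u} R, gProjDim R M

/-- The (left) global dimension of a ring `R`. -/
def lgldim (R : Type u) [Ring R] : ℕ∞ :=
  ⨆ M : ModuleCat.{u} R, projDim R M

/-- `InjDimLE R n M` : the left `R`-module `M` has an injective resolution of length `≤ n`. -/
def InjDimLE (R : Type u) [Ring R] : ℕ → (M : Type u) → [AddCommGroup M] → [Module R M] → Prop
  | 0, M, _, _ => Module.Injective R M
  | (n+1), M, _, _ => Module.Injective R M ∨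
      ∃ (I : ModuleCat.{u} R) (f : M →ₗ[R] I), Module.Injective R I ∧
      Function.Injective f ∧ InjDimLE R n (I ⧸ LinearMap.range f)

/-- The injective dimension of a module, as an element of `ℕ∞`. -/
def injDim (R : Type u) [Ring R] (M : Type u) [AddCommGroup M] [Module R M] : ℕ∞ :=
  sInf {n : ℕ∞ | ∃ m : ℕ, n = (m : ℕ∞) ∧ InjDimLE R m M}

/-- `silp R` : the supremum of the injective dimensions of projective left `R`-modules. -/
def silp (R : Type u) [Ring R] : ℕ∞ :=
  ⨆ (M : ModuleCat.{u} R) (_ : Module.Projective R M), injDim R M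

/-- `spli R` : the supremum of the projective dimensions of injective left `R`-modules. -/
def spli (R : Type u) [Ring R] : ℕ∞ :=
  ⨆ (M : ModuleCat.{u} R) (_ : Module.Injective R M), projDim R M

end GorensteinCore


noncomputable section HopfCore

variable (k : Type u) [CommRing k] (H : Type u) [Ring H] [HopfAlgebra k H]

/-- The trivial left `H`-module structure on `k`, given by the counit. -/
def trivModule : Module H k :=
  Module.compHom k ((Bialgebra.counitAlgHom k H : H →ₐ[k] k) : H →+* k)

/-- The trivial left `H`-module `εk`, as an object of `ModuleCat H`. -/
def trivMod : ModuleCat.{u} H :=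
  @ModuleCat.of H _ k _ (trivModule k H)

/-- The counit of `H`, as a ring homomorphism out of `Hᵐᵒᵖ`. -/
def counitOp : Hᵐᵒᵖ →+* k :=
  RingHom.fromOpposite ((Bialgebra.counitAlgHom k H : H →ₐ[k] k) : H →+* k)
    (fun _ _ => mul_comm _ _)

/-- The trivial right `H`-module structure on `k` (as a left `Hᵐᵒᵖ`-module). -/
def trivModuleOp : Module Hᵐᵒᵖ k :=
  Module.compHom k (counitOp k H)

/-- The trivial right `H`-module `k_ε`, as an object of `ModuleCat Hᵐᵒᵖ`. -/
def trivModOp : ModuleCat.{u} Hᵐᵒᵖ :=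
  @ModuleCat.of Hᵐᵒᵖ _ k _ (trivModuleOp k H)

section TensorAction

variable (M N : Type u) [AddCommGroup M] [Module k M] [Module H M]
  [IsScalarTower k H M] [SMulCommClass k H M]
  [AddCommGroup N] [Module k N] [Module H N] [IsScalarTower k H N] [SMulCommClass k H N]

/-- The representation of `H` on a left `H`-module `M`, as an algebra morphism to
`End_k(M)`. -/
def hRep : H →ₐ[k] Module.End k M :=
  (Algebra.lsmul k k M : H →ₐ[k] Module.End k M)

/-- The representation of `H` on `M ⊗[k] N` given by the comultiplication of `H`:
`h • (m ⊗ n) = ∑ h₁ • m ⊗ h₂ • n`. -/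
def tensorRep : H →ₐ[k] Module.End k (M ⊗[k] N) :=
  ((Module.endTensorEndAlgHom (R := k) (S := k) (A := k) (M := M) (N := N)).comp
    (Algebra.TensorProduct.map (hRep k H M) (hRep k H N))).comp
    (Bialgebra.comulAlgHom k H)

/-- The diagonal left `H`-module structure on `M ⊗[k] N`:
`h • (m ⊗ n) = ∑ h₁ • m ⊗ h₂ • n`. -/
def tensorModule : Module H (M ⊗[k] N) :=
  Module.compHom (M ⊗[k] N)
    ((tensorRep k H M N).toRingHom : H →+* Module.End k (M ⊗[k] N))

/-- The tensor product `M ⊗[k] N` with its diagonal left `H`-module structure, as an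
object of `ModuleCat H`. -/
def tensorMod : ModuleCat.{u} H :=
  @ModuleCat.of H _ (M ⊗[k] N) _ (tensorModule k H M N)

end TensorAction

end HopfCore

namespace HopfAux

variable {k : Type u} [CommRing k] {H : Type u} [Ring H] [HopfAlgebra k H]

/-- Sweedler representation of a product. -/
def Repr.mul {a b : H} {ι κ : Type*} (ra : Coalgebra.Repr k a ι) (rb : Coalgebra.Repr k b κ) :
    Coalgebra.Repr k (a * b) (ι × κ) where
  index := ra.index ×ˢ rb.index
  left := fun p => ra.left p.1 * rb.left p.2
  right := fun p => ra.right p.1 * rb.right p.2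
  eq := by
    rw [Finset.sum_product]
    simp only [← Algebra.TensorProduct.tmul_mul_tmul]
    rw [← Finset.sum_mul_sum]
    rw [ra.eq, rb.eq, ← Bialgebra.comul_mul]

/-- Sweedler representation of a pure tensor in the tensor-product coalgebra. -/
def Repr.tmul {a b : H} {ι κ : Type*} (ra : Coalgebra.Repr k a ι) (rb : Coalgebra.Repr k b κ) :
    Coalgebra.Repr k (a ⊗ₜ[k] b) (ι × κ) where
  index := ra.index ×ˢ rb.index
  left := fun p => ra.left p.1 ⊗ₜ[k] rb.left p.2
  right := fun p => ra.right p.1 ⊗ₜ[k] rb.right p.2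
  eq := by
    have : (comul (R := k) (a ⊗ₜ[k] b)) =
        TensorProduct.tensorTensorTensorComm k H H H H (comul a ⊗ₜ[k] comul b) := rfl
    rw [this, ← ra.eq, ← rb.eq]
    rw [Finset.sum_product]
    simp only [TensorProduct.sum_tmul, TensorProduct.tmul_sum, map_sum,
      TensorProduct.tensorTensorTensorComm_tmul]
    rw [Finset.sum_comm]

section Conv

variable {C : Type u} [AddCommGroup C] [Module k C] [Coalgebra k C]
variable {A : Type u} [Ring A] [Algebra k A]

/-- Convolution product. -/
def conv (f g : C →ₗ[k] A) : C →ₗ[k] A :=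
  LinearMap.mul' k A ∘ₗ TensorProduct.map f g ∘ₗ Coalgebra.comul

lemma conv_repr (f g : C →ₗ[k] A) {c : C} {ι : Type*} (r : Coalgebra.Repr k c ι) :
    conv f g c = ∑ i ∈ r.index, f (r.left i) * g (r.right i) := by
  simp [conv, ← r.eq, map_sum]

/-- The convolution unit. -/
def convUnit : C →ₗ[k] A := Algebra.linearMap k A ∘ₗ Coalgebra.counit

lemma sum_counit_smul {c : C} {ι : Type*} (r : Coalgebra.Repr k c ι) :
    ∑ i ∈ r.index, counit (R := k) (r.left i) • r.right i = c := by
  have := congrArg (TensorProduct.lid k C) (Coalgebra.sum_counit_tmul_eq r)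
  rw [map_sum] at this
  simp only [TensorProduct.lid_tmul, one_smul] at this
  exact this

lemma sum_smul_counit {c : C} {ι : Type*} (r : Coalgebra.Repr k c ι) :
    ∑ i ∈ r.index, counit (R := k) (r.right i) • r.left i = c := by
  have := congrArg (TensorProduct.rid k C) (Coalgebra.sum_tmul_counit_eq r)
  rw [map_sum] at this
  simp only [TensorProduct.rid_tmul, one_smul] at this
  exact this

lemma conv_unit_left (f : C →ₗ[k] A) : conv convUnit f = f := by
  ext c
  have r := Coalgebra.Repr.arbitrary k c
  rw [conv_repr _ _ r]
  calc ∑ i ∈ r.index, (convUnit : C →ₗ[k] A) (r.left i) * f (r.right i)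
      = ∑ i ∈ r.index, f (counit (R := k) (r.left i) • r.right i) := by
        refine Finset.sum_congr rfl fun i _ => ?_
        simp [convUnit, Algebra.smul_def]
    _ = f c := by rw [← map_sum, HopfAux.sum_counit_smul r]

lemma conv_unit_right (f : C →ₗ[k] A) : conv f convUnit = f := by
  ext c
  have r := Coalgebra.Repr.arbitrary k c
  rw [conv_repr _ _ r]
  calc ∑ i ∈ r.index, f (r.left i) * (convUnit : C →ₗ[k] A) (r.right i)
      = ∑ i ∈ r.index, f (counit (R := k) (r.right i) • r.left i) := by
        refine Finset.sum_congr rfl fun i _ => ?_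
        rw [map_smul, convUnit]
        simp [Algebra.smul_def, Algebra.commutes]
    _ = f c := by rw [← map_sum, sum_smul_counit r]

lemma conv_assoc (f g h : C →ₗ[k] A) : conv (conv f g) h = conv f (conv g h) := by
  ext c
  have r := Coalgebra.Repr.arbitrary k c
  have a₁ : ∀ i : r.ι, Coalgebra.Repr k (r.left i) (C × C) := fun i => Coalgebra.Repr.arbitrary k _
  have a₂ : ∀ i : r.ι, Coalgebra.Repr k (r.right i) (C × C) := fun i => Coalgebra.Repr.arbitrary k _
  have key := Coalgebra.sum_tmul_tmul_eq r a₁ a₂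
  -- map the coassociativity identity into A via f ⊗ g ⊗ h followed by multiplication
  let Φ : C ⊗[k] (C ⊗[k] C) →ₗ[k] A :=
    LinearMap.mul' k A ∘ₗ TensorProduct.map f (LinearMap.mul' k A ∘ₗ TensorProduct.map g h)
  have key2 := congrArg Φ key
  simp only [map_sum, Φ, LinearMap.coe_comp, Function.comp_apply, TensorProduct.map_tmul,
    LinearMap.mul'_apply] at key2
  rw [conv_repr _ _ r, conv_repr _ _ r]
  calc ∑ i ∈ r.index, conv f g (r.left i) * h (r.right i)
      = ∑ i ∈ r.index, ∑ j ∈ (a₁ i).index,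
          f ((a₁ i).left j) * ((a₁ i).right j |> g) * h (r.right i) := by
        refine Finset.sum_congr rfl fun i _ => ?_
        rw [conv_repr _ _ (a₁ i), Finset.sum_mul]
    _ = ∑ i ∈ r.index, ∑ j ∈ (a₂ i).index,
          f (r.left i) * (g ((a₂ i).left j) * h ((a₂ i).right j)) := by
        rw [← key2]
        refine Finset.sum_congr rfl fun i _ => Finset.sum_congr rfl fun j _ => ?_
        rw [mul_assoc]
    _ = ∑ i ∈ r.index, f (r.left i) * conv g h (r.right i) := by
        refine Finset.sum_congr rfl fun i _ => ?_
        rw [conv_repr _ _ (a₂ i), Finset.mul_sum]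

end Conv

section Antipode

open HopfAlgebra

lemma antipode_one_ : antipode (R := k) (A := H) 1 = 1 := by
  have h := mul_antipode_rTensor_comul_apply (R := k) (A := H) 1
  rw [Bialgebra.comul_one, Algebra.TensorProduct.one_def] at h
  simpa using h

lemma antipode_algebraMap_ (c : k) :
    antipode (R := k) (A := H) (algebraMap k H c) = algebraMap k H c := by
  rw [Algebra.algebraMap_eq_smul_one, map_smul, antipode_one_]

lemma antipode_mul_ (a b : H) :
    antipode (R := k) (A := H) (a * b) =
      antipode (R := k) (A := H) b * antipode (R := k) (A := H) a := by
  classical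
  set S : H →ₗ[k] H := antipode (R := k) (A := H) with hS
  let μ : H ⊗[k] H →ₗ[k] H := LinearMap.mul' k H
  let ν : H ⊗[k] H →ₗ[k] H := S ∘ₗ μ
  let ρ : H ⊗[k] H →ₗ[k] H :=
    μ ∘ₗ TensorProduct.map S S ∘ₗ (TensorProduct.comm k H H).toLinearMap
  have claim1 : conv ν μ = (convUnit : H ⊗[k] H →ₗ[k] H) := by
    apply TensorProduct.ext'
    intro a b
    have ra := Coalgebra.Repr.arbitrary k a
    have rb := Coalgebra.Repr.arbitrary k b
    rw [conv_repr _ _ (Repr.tmul ra rb)]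
    have key := sum_antipode_mul_eq_algebraMap_counit (R := k) (Repr.mul ra rb)
    simp only [Repr.mul, Repr.tmul, Finset.sum_product] at key ⊢
    simp only [ν, μ, LinearMap.coe_comp, Function.comp_apply, LinearMap.mul'_apply]
    rw [key]
    simp [convUnit, Bialgebra.counit_mul]
    exact Algebra.commutes _ _
  have claim2 : conv μ ρ = (convUnit : H ⊗[k] H →ₗ[k] H) := by
    apply TensorProduct.ext'
    intro a b
    have ra := Coalgebra.Repr.arbitrary k a
    have rb := Coalgebra.Repr.arbitrary k b
    rw [conv_repr _ _ (Repr.tmul ra rb)]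
    simp only [Repr.tmul, Finset.sum_product]
    simp only [μ, ρ, ν, LinearMap.coe_comp, Function.comp_apply, LinearEquiv.coe_coe,
      TensorProduct.comm_tmul, TensorProduct.map_tmul, LinearMap.mul'_apply]
    calc ∑ i ∈ ra.index, ∑ j ∈ rb.index,
          ra.left i * rb.left j * (S (rb.right j) * S (ra.right i))
        = ∑ i ∈ ra.index, ra.left i *
            (∑ j ∈ rb.index, rb.left j * S (rb.right j)) * S (ra.right i) := by
          refine Finset.sum_congr rfl fun i _ => ?_
          rw [Finset.mul_sum, Finset.sum_mul]
          refine Finset.sum_congr rfl fun j _ => by simp only [mul_assoc]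
      _ = algebraMap k H (counit (R := k) b) * ∑ i ∈ ra.index, ra.left i * S (ra.right i) := by
          rw [sum_mul_antipode_eq_algebraMap_counit (R := k) rb, Finset.mul_sum]
          refine Finset.sum_congr rfl fun i _ => ?_
          rw [← Algebra.commutes (counit (R := k) b) (ra.left i), mul_assoc]
      _ = (convUnit : H ⊗[k] H →ₗ[k] H) (a ⊗ₜ[k] b) := by
          rw [sum_mul_antipode_eq_algebraMap_counit (R := k) ra]
          simp only [convUnit, ← map_mul, LinearMap.coe_comp, Function.comp_apply]
          rw [mul_comm]
          simp [mul_comm]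
  have : ν = ρ := by
    calc ν = conv ν (convUnit : H ⊗[k] H →ₗ[k] H) := (conv_unit_right ν).symm
      _ = conv ν (conv μ ρ) := by rw [claim2]
      _ = conv (conv ν μ) ρ := (conv_assoc ν μ ρ).symm
      _ = conv (convUnit : H ⊗[k] H →ₗ[k] H) ρ := by rw [claim1]
      _ = ρ := conv_unit_left ρ
  have := congrArg (fun f : H ⊗[k] H →ₗ[k] H => f (a ⊗ₜ[k] b)) this
  simpa [ν, ρ, μ] using this

variable (hS : Function.Bijective (antipode (R := k) (A := H)))

/-- The inverse of the antipode, as a linear map. -/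
def invAntipode : H →ₗ[k] H :=
  (LinearEquiv.ofBijective (antipode (R := k) (A := H)) hS).symm.toLinearMap

lemma antipode_invAntipode (x : H) :
    antipode (R := k) (A := H) (invAntipode hS x) = x :=
  (LinearEquiv.ofBijective (antipode (R := k) (A := H)) hS).apply_symm_apply x

lemma invAntipode_antipode (x : H) :
    invAntipode hS (antipode (R := k) (A := H) x) = x :=
  (LinearEquiv.ofBijective (antipode (R := k) (A := H)) hS).symm_apply_apply x

lemma sum_invAntipode_right_mul_left {a : H} {ι : Type*} (r : Coalgebra.Repr k a ι) :
    ∑ i ∈ r.index, invAntipode hS (r.right i) * r.left i =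
      algebraMap k H (counit (R := k) a) := by
  apply hS.injective
  rw [map_sum]
  calc ∑ i ∈ r.index, antipode (R := k) (A := H) (invAntipode hS (r.right i) * r.left i)
      = ∑ i ∈ r.index, antipode (R := k) (A := H) (r.left i) * r.right i := by
        refine Finset.sum_congr rfl fun i _ => ?_
        rw [antipode_mul_, antipode_invAntipode]
    _ = algebraMap k H (counit (R := k) a) := sum_antipode_mul_eq_algebraMap_counit r
    _ = antipode (R := k) (A := H) (algebraMap k H (counit (R := k) a)) :=
        (antipode_algebraMap_ _).symm

lemma sum_right_mul_invAntipode_left {a : H} {ι : Type*} (r : Coalgebra.Repr k a ι) :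
    ∑ i ∈ r.index, r.right i * invAntipode hS (r.left i) =
      algebraMap k H (counit (R := k) a) := by
  apply hS.injective
  rw [map_sum]
  calc ∑ i ∈ r.index, antipode (R := k) (A := H) (r.right i * invAntipode hS (r.left i))
      = ∑ i ∈ r.index, r.left i * antipode (R := k) (A := H) (r.right i) := by
        refine Finset.sum_congr rfl fun i _ => ?_
        rw [antipode_mul_, antipode_invAntipode]
    _ = algebraMap k H (counit (R := k) a) := sum_mul_antipode_eq_algebraMap_counit r
    _ = antipode (R := k) (A := H) (algebraMap k H (counit (R := k) a)) :=
        (antipode_algebraMap_ _).symm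

end Antipode

end HopfAux



noncomputable section DiagCore

open Coalgebra HopfAux

variable (k : Type u) [CommRing k] (H : Type u) [Ring H] [HopfAlgebra k H]
variable (M : Type u) [AddCommGroup M] [Module k M] [Module H M]
  [IsScalarTower k H M] [SMulCommClass k H M]
variable (N : Type u) [AddCommGroup N] [Module k N] [Module H N]
  [IsScalarTower k H N] [SMulCommClass k H N]

end DiagCore

/-- Type synonym for `M ⊗[k] N` carrying the diagonal `H`-module structure. -/
def MDiag (k : Type u) [CommRing k] (H : Type u) [Ring H] [HopfAlgebra k H]
    (M : Type u) [AddCommGroup M] [Module k M] [Module H M]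
    (N : Type u) [AddCommGroup N] [Module k N] [Module H N] : Type u := M ⊗[k] N

noncomputable section DiagCore2

open Coalgebra HopfAux

variable (k : Type u) [CommRing k] (H : Type u) [Ring H] [HopfAlgebra k H]
variable (M : Type u) [AddCommGroup M] [Module k M] [Module H M]
  [IsScalarTower k H M] [SMulCommClass k H M]
variable (N : Type u) [AddCommGroup N] [Module k N] [Module H N]
  [IsScalarTower k H N] [SMulCommClass k H N]

instance : AddCommGroup (MDiag k H M N) := inferInstanceAs (AddCommGroup (M ⊗[k] N))
instance : Module k (MDiag k H M N) := inferInstanceAs (Module k (M ⊗[k] N))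
instance : Module H (MDiag k H M N) := tensorModule k H M N

lemma mdiag_smul (h : H) (x : MDiag k H M N) :
    h • x = tensorRep k H M N h (x : M ⊗[k] N) := rfl

/-- The diagonal action, as a linear map from `H ⊗ H`. -/
def diagAct : H ⊗[k] H →ₗ[k] Module.End k (M ⊗[k] N) :=
  (Module.endTensorEndAlgHom (R := k) (S := k) (A := k) (M := M) (N := N)).toLinearMap ∘ₗ
    TensorProduct.map (hRep k H M).toLinearMap (hRep k H N).toLinearMap

lemma tensorRep_eq (h : H) :
    (tensorRep k H M N h : Module.End k (M ⊗[k] N)) = diagAct k H M N (comul h) := by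
  have key : ∀ z : H ⊗[k] H,
      (Algebra.TensorProduct.map (hRep k H M) (hRep k H N)) z =
      TensorProduct.map (hRep k H M).toLinearMap (hRep k H N).toLinearMap z := fun z => by
    induction z using TensorProduct.induction_on with
    | zero => simp
    | tmul a b => simp [Algebra.TensorProduct.map_tmul]
    | add x y hx hy => rw [map_add, map_add, hx, hy]
  simp only [tensorRep, AlgHom.coe_comp, Function.comp_apply, Bialgebra.comulAlgHom_apply]
  rw [key]
  rfl

lemma diagAct_tmul (a b : H) (m : M) (n : N) :
    diagAct k H M N (a ⊗ₜ[k] b) (m ⊗ₜ[k] n) = (a • m) ⊗ₜ[k] (b • n) := by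
  simp [diagAct, Module.endTensorEndAlgHom_apply, hRep]

set_option maxHeartbeats 1000000 in
instance : SMulCommClass k H (MDiag k H M N) where
  smul_comm c h x := by
    rw [mdiag_smul, mdiag_smul]
    exact (map_smul (tensorRep k H M N h) c (x : M ⊗[k] N)).symm

set_option maxHeartbeats 1000000 in
instance : IsScalarTower k H (MDiag k H M N) where
  smul_assoc c h x := by
    rw [mdiag_smul, mdiag_smul]
    have h1 : tensorRep k H M N (c • h) = c • tensorRep k H M N h := by
      simpa using (tensorRep k H M N).toLinearMap.map_smul c h
    rw [h1]
    rfl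

lemma mdiag_smul_tmul (h : H) {ι : Type*} (r : Coalgebra.Repr k h ι) (m : M) (n : N) :
    h • (show MDiag k H M N from m ⊗ₜ[k] n) =
      (∑ i ∈ r.index, (r.left i • m) ⊗ₜ[k] (r.right i • n) : M ⊗[k] N) := by
  rw [mdiag_smul, tensorRep_eq, ← r.eq]
  simp only [map_sum, LinearMap.coe_sum, Finset.sum_apply]
  exact Finset.sum_congr rfl fun i _ => diagAct_tmul k H M N _ _ _ _

variable {M N}

/-- Criterion for a `k`-linear map out of `M ⊗ N` to be `H`-linear for the
diagonal action. -/
lemma hlinear_criterion {Z : Type u} [AddCommGroup Z] [Module k Z] [Module H Z]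
    (L : H ⊗[k] H →ₗ[k] Module.End k Z)
    (hL : ∀ (h : H) (z : Z), h • z = L (comul h) z)
    (g : M ⊗[k] N →ₗ[k] Z)
    (hg : ∀ (a b : H) (m : M) (n : N),
      g ((a • m) ⊗ₜ[k] (b • n)) = L (a ⊗ₜ[k] b) (g (m ⊗ₜ[k] n))) :
    ∀ (h : H) (x : MDiag k H M N), g (h • x) = h • g x := by
  intro h x
  rw [mdiag_smul, hL, tensorRep_eq]
  generalize comul (R := k) h = z
  induction z using TensorProduct.induction_on with
  | zero => simp; erw [LinearMap.zero_apply, map_zero]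
  | tmul a b =>
      induction (x : M ⊗[k] N) using TensorProduct.induction_on with
      | zero => simp
      | tmul m n => rw [diagAct_tmul]; exact hg a b m n
      | add x₁ x₂ ih₁ ih₂ => simp only [map_add, LinearMap.map_add] at ih₁ ih₂ ⊢; rw [ih₁, ih₂]
  | add z₁ z₂ ih₁ ih₂ => simp only [map_add, LinearMap.add_apply] at ih₁ ih₂ ⊢; erw [LinearMap.add_apply, map_add, ih₁, ih₂]

variable {H}

/-- Build an `H`-linear map from a `k`-linear map commuting with the `H`-actions. -/
def mkHLinear {X Y : Type u} [AddCommGroup X] [AddCommGroup Y] [Module k X] [Module k Y]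
    [Module H X] [Module H Y] (g : X →ₗ[k] Y) (hg : ∀ (h : H) (x : X), g (h • x) = h • g x) :
    X →ₗ[H] Y :=
  { toFun := g, map_add' := map_add g, map_smul' := hg }

@[simp] lemma mkHLinear_apply {X Y : Type u} [AddCommGroup X] [AddCommGroup Y] [Module k X]
    [Module k Y] [Module H X] [Module H Y] (g : X →ₗ[k] Y)
    (hg : ∀ (h : H) (x : X), g (h • x) = h • g x) (x : X) :
    mkHLinear k g hg x = g x := rfl

/-- The `k`-linear map underlying an `H`-linear map. -/
def kOf {X Y : Type u} [AddCommGroup X] [AddCommGroup Y] [Module k X] [Module k Y]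
    [Module H X] [Module H Y] [IsScalarTower k H X] [IsScalarTower k H Y]
    (f : X →ₗ[H] Y) : X →ₗ[k] Y :=
  { toFun := f, map_add' := map_add f,
    map_smul' := by
      intro c x
      show f (c • x) = c • f x
      rw [← algebraMap_smul H c x, map_smul, algebraMap_smul] }

@[simp] lemma kOf_apply {X Y : Type u} [AddCommGroup X] [AddCommGroup Y] [Module k X]
    [Module k Y] [Module H X] [Module H Y] [IsScalarTower k H X] [IsScalarTower k H Y]
    (f : X →ₗ[H] Y) (x : X) : kOf k f x = f x := rfl



end DiagCore2

section Twist

open Coalgebra HopfAux HopfAlgebra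

variable (k : Type u) [CommRing k] (H : Type u) [Ring H] [HopfAlgebra k H]
variable (N : Type u) [AddCommGroup N] [Module k N] [Module H N]
  [IsScalarTower k H N] [SMulCommClass k H N]

/-- `h ⊗ n ↦ ∑ h₁ ⊗ u(h₂) • n`. -/
def twist (u : H →ₗ[k] H) : H ⊗[k] N →ₗ[k] H ⊗[k] N :=
  (LinearMap.lTensor H (TensorProduct.lift ((hRep k H N).toLinearMap ∘ₗ u))) ∘ₗ
    (TensorProduct.assoc k H H N).toLinearMap ∘ₗ
    (LinearMap.rTensor N (Coalgebra.comul (R := k) (A := H)))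

lemma twist_tmul (u : H →ₗ[k] H) (h : H) {ι : Type*} (r : Coalgebra.Repr k h ι) (n : N) :
    twist k H N u (h ⊗ₜ[k] n) = ∑ i ∈ r.index, r.left i ⊗ₜ[k] (u (r.right i) • n) := by
  simp only [twist, LinearMap.coe_comp, Function.comp_apply, LinearMap.rTensor_tmul,
    LinearEquiv.coe_coe]
  rw [← r.eq]
  rw [TensorProduct.sum_tmul, map_sum, map_sum]
  refine Finset.sum_congr rfl fun i _ => ?_
  simp [hRep]

lemma twist_twist (u v : H →ₗ[k] H) (hconv : conv u v = (convUnit : H →ₗ[k] H)) (x : H ⊗[k] N) :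
    twist k H N u (twist k H N v x) = x := by
  induction x using TensorProduct.induction_on with
  | zero => simp
  | add x y hx hy => rw [map_add, map_add, hx, hy]
  | tmul h n =>
    have r := Coalgebra.Repr.arbitrary k h
    have key := Coalgebra.sum_tmul_tmul_eq r (fun i => Coalgebra.Repr.arbitrary k (r.left i))
      (fun i => Coalgebra.Repr.arbitrary k (r.right i))
    set rL : (i : r.ι) → Coalgebra.Repr k (r.left i) (H × H) :=
      fun i => Coalgebra.Repr.arbitrary k (r.left i)
    set rR : (i : r.ι) → Coalgebra.Repr k (r.right i) (H × H) :=
      fun i => Coalgebra.Repr.arbitrary k (r.right i)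
    -- map the coassociativity identity into H ⊗ N
    let γ : H ⊗[k] H →ₗ[k] N :=
      (hRep k H N).toLinearMap.flip n ∘ₗ LinearMap.mul' k H ∘ₗ TensorProduct.map u v
    have key2 := congrArg (LinearMap.lTensor H γ) key
    simp only [map_sum, LinearMap.lTensor_tmul, γ, LinearMap.coe_comp, Function.comp_apply,
      TensorProduct.map_tmul, LinearMap.mul'_apply, LinearMap.flip_apply,
      AlgHom.toLinearMap_apply] at key2
    calc twist k H N u (twist k H N v (h ⊗ₜ[k] n))
        = ∑ i ∈ r.index, twist k H N u (r.left i ⊗ₜ[k] (v (r.right i) • n)) := by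
          rw [twist_tmul k H N v h r, map_sum]
      _ = ∑ i ∈ r.index, ∑ j ∈ (rL i).index,
            (rL i).left j ⊗ₜ[k] (hRep k H N (u ((rL i).right j) * v (r.right i)) n) := by
          refine Finset.sum_congr rfl fun i _ => ?_
          rw [twist_tmul k H N u _ (rL i)]
          refine Finset.sum_congr rfl fun j _ => ?_
          congr 1
          simp [hRep, mul_smul]
      _ = ∑ i ∈ r.index, ∑ j ∈ (rR i).index,
            r.left i ⊗ₜ[k] (hRep k H N (u ((rR i).left j) * v ((rR i).right j)) n) := key2
      _ = ∑ i ∈ r.index, r.left i ⊗ₜ[k] ((conv u v) (r.right i) • n) := by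
          refine Finset.sum_congr rfl fun i _ => ?_
          rw [conv_repr u v (rR i)]
          rw [← TensorProduct.tmul_sum]
          congr 1
          rw [Finset.sum_smul]
          refine Finset.sum_congr rfl fun j _ => ?_
          simp [hRep, mul_smul]
      _ = h ⊗ₜ[k] n := by
          rw [hconv]
          have : ∀ i, (convUnit : H →ₗ[k] H) (r.right i) • n = counit (R := k) (r.right i) • n :=
            fun i => by simp [convUnit, algebraMap_smul]
          calc ∑ i ∈ r.index, r.left i ⊗ₜ[k] ((convUnit : H →ₗ[k] H) (r.right i) • n)
              = ∑ i ∈ r.index, (counit (R := k) (r.right i) • r.left i) ⊗ₜ[k] n := by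
                refine Finset.sum_congr rfl fun i _ => ?_
                rw [this i]
                exact (TensorProduct.smul_tmul _ _ _).symm
            _ = h ⊗ₜ[k] n := by rw [← TensorProduct.sum_tmul, sum_smul_counit r]

lemma conv_antipode_id :
    conv (antipode (R := k) (A := H)) LinearMap.id = (convUnit : H →ₗ[k] H) :=
  HopfAlgebra.mul_antipode_rTensor_comul (R := k) (A := H)

lemma conv_id_antipode :
    conv LinearMap.id (antipode (R := k) (A := H)) = (convUnit : H →ₗ[k] H) :=
  HopfAlgebra.mul_antipode_lTensor_comul (R := k) (A := H)

/-- The `H`-linear untwisting map `(H ⊗ N)_left → (H ⊗ N)_diag`. -/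
def untwistHL : (H ⊗[k] N) →ₗ[H] MDiag k H H N :=
  mkHLinear k (twist k H N LinearMap.id) (by
    intro g x
    change twist k H N LinearMap.id (g • x) = tensorRep k H H N g (twist k H N LinearMap.id x)
    induction x using TensorProduct.induction_on with
    | zero => rw [smul_zero, map_zero, map_zero]
    | add x y hx hy => rw [smul_add, map_add, map_add, hx, hy, map_add]
    | tmul h n =>
      have rg := Coalgebra.Repr.arbitrary k g
      have rh := Coalgebra.Repr.arbitrary k h
      rw [show g • (h ⊗ₜ[k] n) = (g * h) ⊗ₜ[k] n from by
        rw [TensorProduct.smul_tmul', smul_eq_mul]]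
      rw [twist_tmul k H N LinearMap.id (g*h) (HopfAux.Repr.mul rg rh) n,
        twist_tmul k H N LinearMap.id h rh n, map_sum]
      simp only [HopfAux.Repr.mul, Finset.sum_product, LinearMap.id_coe, id_eq]
      rw [Finset.sum_comm]
      refine Finset.sum_congr rfl fun j _ => ?_
      rw [tensorRep_eq, ← rg.eq]
      simp only [map_sum, LinearMap.coe_sum, Finset.sum_apply]
      refine Finset.sum_congr rfl fun i _ => ?_
      rw [diagAct_tmul, smul_eq_mul, mul_smul])

lemma untwistHL_bij : Function.Bijective (untwistHL k H N) := by
  have h1 : ∀ x, twist k H N LinearMap.id (twist k H N (antipode (R := k) (A := H)) x) = x :=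
    twist_twist k H N _ _ (conv_id_antipode k H)
  have h2 : ∀ x, twist k H N (antipode (R := k) (A := H)) (twist k H N LinearMap.id x) = x :=
    twist_twist k H N _ _ (conv_antipode_id k H)
  exact Function.bijective_iff_has_inverse.2
    ⟨twist k H N (antipode (R := k) (A := H)), h2, h1⟩

/-- The untwisting equivalence `(H ⊗ N)_left ≃ (H ⊗ N)_diag` as `H`-modules. -/
def untwistL : (H ⊗[k] N) ≃ₗ[H] MDiag k H H N :=
  LinearEquiv.ofBijective (untwistHL k H N) (untwistHL_bij k H N)

end Twist

section MapDiag

open Coalgebra HopfAux HopfAlgebra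

variable (k : Type u) [CommRing k] (H : Type u) [Ring H] [HopfAlgebra k H]
variable (M : Type u) [AddCommGroup M] [Module k M] [Module H M]
  [IsScalarTower k H M] [SMulCommClass k H M]
variable (N : Type u) [AddCommGroup N] [Module k N] [Module H N]
  [IsScalarTower k H N] [SMulCommClass k H N]
variable (M' : Type u) [AddCommGroup M'] [Module k M'] [Module H M']
  [IsScalarTower k H M'] [SMulCommClass k H M']

lemma mdiag_hL (Z : Type u) [AddCommGroup Z] [Module k Z] [Module H Z]
    [IsScalarTower k H Z] [SMulCommClass k H Z] :
    ∀ (h : H) (z : MDiag k H M Z), h • z = diagAct k H M Z (comul h) z := fun h z => by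
  rw [mdiag_smul, tensorRep_eq]

/-- Functoriality of the diagonal module in the first variable. -/
def mapDiagL (f : M' →ₗ[H] M) : MDiag k H M' N →ₗ[H] MDiag k H M N :=
  mkHLinear k
    (TensorProduct.map (kOf k f) (LinearMap.id : N →ₗ[k] N) :
        M' ⊗[k] N →ₗ[k] M ⊗[k] N)
    (hlinear_criterion (Z := MDiag k H M N) k H (diagAct k H M N) (mdiag_hL k H M N) _
      (fun a b m n => by
        show TensorProduct.map (kOf k f) LinearMap.id ((a • m) ⊗ₜ[k] (b • n)) =
          diagAct k H M N (a ⊗ₜ[k] b) (TensorProduct.map (kOf k f) LinearMap.id (m ⊗ₜ[k] n))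
        simp only [TensorProduct.map_tmul, kOf_apply, LinearMap.id_coe, id_eq, map_smul,
          diagAct_tmul]))

lemma mapDiagL_tmul (f : M' →ₗ[H] M) (m : M') (n : N) :
    mapDiagL k H M N M' f (show MDiag k H M' N from m ⊗ₜ[k] n) =
      (f m ⊗ₜ[k] n : M ⊗[k] N) := rfl

/-- Functoriality of the diagonal module in the second variable. -/
def mapDiagR (f : M' →ₗ[H] N) : MDiag k H M M' →ₗ[H] MDiag k H M N :=
  mkHLinear k
    (TensorProduct.map (LinearMap.id : M →ₗ[k] M) (kOf k f) :
        M ⊗[k] M' →ₗ[k] M ⊗[k] N)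
    (hlinear_criterion (Z := MDiag k H M N) k H (diagAct k H M N) (mdiag_hL k H M N) _
      (fun a b m n => by
        show TensorProduct.map LinearMap.id (kOf k f) ((a • m) ⊗ₜ[k] (b • n)) =
          diagAct k H M N (a ⊗ₜ[k] b) (TensorProduct.map LinearMap.id (kOf k f) (m ⊗ₜ[k] n))
        simp only [TensorProduct.map_tmul, kOf_apply, LinearMap.id_coe, id_eq, map_smul,
          diagAct_tmul]))

lemma mapDiagR_tmul (f : M' →ₗ[H] N) (m : M) (n : M') :
    mapDiagR k H M N M' f (show MDiag k H M M' from m ⊗ₜ[k] n) =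
      (m ⊗ₜ[k] f n : M ⊗[k] N) := rfl

/-- The action map `H ⊗ M → M` as an `H`-linear map. -/
def actionMap : (H ⊗[k] M) →ₗ[H] M :=
  mkHLinear k (TensorProduct.lift (hRep k H M).toLinearMap) (by
    intro g x
    induction x using TensorProduct.induction_on with
    | zero => simp
    | add x y hx hy => rw [smul_add, map_add, map_add, hx, hy, smul_add]
    | tmul h m =>
      rw [show g • (h ⊗ₜ[k] m) = (g * h) ⊗ₜ[k] m from by
        rw [TensorProduct.smul_tmul', smul_eq_mul]]
      simp [hRep, mul_smul])

lemma actionMap_surjective : Function.Surjective (actionMap k H M) := fun m =>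
  ⟨(1 : H) ⊗ₜ[k] m, by simp [actionMap, hRep]⟩

end MapDiag

section Shuffle

open Coalgebra HopfAux HopfAlgebra

variable (k : Type u) [CommRing k] (H : Type u) [Ring H] [HopfAlgebra k H]
variable (N : Type u) [AddCommGroup N] [Module k N] [Module H N]
  [IsScalarTower k H N] [SMulCommClass k H N]
variable (V : Type u) [AddCommGroup V] [Module k V]

/-- The underlying `k`-equivalence of the shuffle. -/
def shuffleAux : ((H ⊗[k] V) ⊗[k] N) ≃ₗ[k] ((H ⊗[k] N) ⊗[k] V) :=
  (TensorProduct.assoc k H V N) ≪≫ₗ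
    (TensorProduct.congr (LinearEquiv.refl k H) (TensorProduct.comm k V N)) ≪≫ₗ
    (TensorProduct.assoc k H N V).symm

lemma shuffleAux_tmul (h : H) (v : V) (n : N) :
    shuffleAux k H N V ((h ⊗ₜ[k] v) ⊗ₜ[k] n) = (h ⊗ₜ[k] n) ⊗ₜ[k] v := by
  simp [shuffleAux]

lemma shuffle_smul (h : H) (z : (MDiag k H H N) ⊗[k] V) :
    h • z = ((LinearMap.rTensorHom V).comp (diagAct k H H N)) (comul h) z := by
  induction z using TensorProduct.induction_on with
  | zero => simp; erw [map_zero]; rfl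
  | add x y hx hy => rw [smul_add, hx, hy]; exact (map_add _ _ _).symm
  | tmul x v =>
    rw [TensorProduct.smul_tmul', mdiag_hL k H H N h x]
    rfl

lemma shuffle_comm (a b : H) (x : H ⊗[k] V) (n : N) :
    ((shuffleAux k H N V).toLinearMap : (H ⊗[k] V) ⊗[k] N →ₗ[k] (MDiag k H H N) ⊗[k] V)
        ((a • x) ⊗ₜ[k] (b • n)) =
      ((LinearMap.rTensorHom V).comp (diagAct k H H N)) (a ⊗ₜ[k] b)
        (((shuffleAux k H N V).toLinearMap :
          (H ⊗[k] V) ⊗[k] N →ₗ[k] (MDiag k H H N) ⊗[k] V) (x ⊗ₜ[k] n)) := by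
  show shuffleAux k H N V ((a • x) ⊗ₜ[k] (b • n)) =
    LinearMap.rTensor V (diagAct k H H N (a ⊗ₜ[k] b)) (shuffleAux k H N V (x ⊗ₜ[k] n))
  induction x using TensorProduct.induction_on with
  | zero => simp
  | add x y hx hy =>
      rw [smul_add, TensorProduct.add_tmul, map_add, hx, hy, TensorProduct.add_tmul, map_add,
        map_add]
  | tmul h v =>
      rw [show a • (h ⊗ₜ[k] v) = (a * h) ⊗ₜ[k] v from by
        rw [TensorProduct.smul_tmul', smul_eq_mul]]
      rw [shuffleAux_tmul, shuffleAux_tmul, LinearMap.rTensor_tmul, diagAct_tmul, smul_eq_mul]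

/-- The shuffle equivalence `(H ⊗ V) ⊗ N ≃ (H ⊗ N) ⊗ V` as `H`-modules. -/
def shuffle : MDiag k H (H ⊗[k] V) N ≃ₗ[H] (MDiag k H H N) ⊗[k] V :=
  LinearEquiv.ofBijective ((mkHLinear k
    (((shuffleAux k H N V).toLinearMap : (H ⊗[k] V) ⊗[k] N →ₗ[k] (MDiag k H H N) ⊗[k] V))
    (hlinear_criterion (Z := (MDiag k H H N) ⊗[k] V) k H
      ((LinearMap.rTensorHom V).comp (diagAct k H H N))
      (shuffle_smul k H N V) _ (shuffle_comm k H N V)) :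
        MDiag k H (H ⊗[k] V) N →ₗ[H] (MDiag k H H N) ⊗[k] V))
    ((shuffleAux k H N V).bijective)

end Shuffle

section ProjLeft

open Coalgebra HopfAux HopfAlgebra

variable (k : Type u) [Field k] (H : Type u) [Ring H] [HopfAlgebra k H]
variable (M : Type u) [AddCommGroup M] [Module k M] [Module H M]
  [IsScalarTower k H M] [SMulCommClass k H M]
variable (N : Type u) [AddCommGroup N] [Module k N] [Module H N]
  [IsScalarTower k H N] [SMulCommClass k H N]

/-- `(H ⊗ V)_diag ⊗ N` is a projective `H`-module. -/
lemma projective_mdiag_free (V : Type u) [AddCommGroup V] [Module k V] :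
    Module.Projective H (MDiag k H (H ⊗[k] V) N) := by
  have h1 : Module.Projective H ((H ⊗[k] N) ⊗[k] V) := inferInstance
  have e : ((H ⊗[k] N) ⊗[k] V) ≃ₗ[H] MDiag k H (H ⊗[k] V) N :=
    ((TensorProduct.AlgebraTensorModule.congr (untwistL k H N) (LinearEquiv.refl k V)).trans
      (shuffle k H N V).symm)
  exact Module.Projective.of_equiv e

/-- If `M` is projective then so is `M ⊗ N` with the diagonal action. -/
lemma projective_mdiag_left (hM : Module.Projective H M) :
    Module.Projective H (MDiag k H M N) := by
  have : Module.Projective H M := hM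
  obtain ⟨s, hs⟩ := Module.projective_lifting_property
    (actionMap k H M) (LinearMap.id : M →ₗ[H] M) (actionMap_surjective k H M)
  have hretr : (mapDiagL k H M N (H ⊗[k] M) (actionMap k H M)).comp
      (mapDiagL k H (H ⊗[k] M) N M s) = LinearMap.id := by
    apply LinearMap.ext
    intro x
    induction x using TensorProduct.induction_on with
    | zero => exact (LinearMap.map_zero _).trans (LinearMap.map_zero _).symm
    | add x y hx hy => erw [map_add, map_add, hx, hy]
    | tmul m n =>
        exact congrArg (fun y : M => (y ⊗ₜ[k] n : M ⊗[k] N)) (LinearMap.congr_fun hs m)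
  have hproj : Module.Projective H (MDiag k H (H ⊗[k] M) N) :=
    projective_mdiag_free k H N M
  exact Module.Projective.of_split (mapDiagL k H (H ⊗[k] M) N M s)
    (mapDiagL k H M N (H ⊗[k] M) (actionMap k H M)) hretr

end ProjLeft

section TwistRight

open Coalgebra HopfAux HopfAlgebra

variable (k : Type u) [CommRing k] (H : Type u) [Ring H] [HopfAlgebra k H]
variable (M : Type u) [AddCommGroup M] [Module k M] [Module H M]
  [IsScalarTower k H M] [SMulCommClass k H M]

/-- `h ⊗ m ↦ ∑ u(h₁) • m ⊗ h₂`. -/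
def twistP (u : H →ₗ[k] H) : H ⊗[k] M →ₗ[k] M ⊗[k] H :=
  (TensorProduct.comm k H M).toLinearMap ∘ₗ
  (LinearMap.lTensor H (TensorProduct.lift ((hRep k H M).toLinearMap ∘ₗ u))) ∘ₗ
  (TensorProduct.leftComm k H H M).toLinearMap ∘ₗ
  (TensorProduct.assoc k H H M).toLinearMap ∘ₗ
  (LinearMap.rTensor M (Coalgebra.comul (R := k) (A := H)))

lemma twistP_tmul (u : H →ₗ[k] H) (h : H) {ι : Type*} (r : Coalgebra.Repr k h ι) (m : M) :
    twistP k H M u (h ⊗ₜ[k] m) = ∑ i ∈ r.index, (u (r.left i) • m) ⊗ₜ[k] r.right i := by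
  simp only [twistP, LinearMap.coe_comp, Function.comp_apply, LinearMap.rTensor_tmul,
    LinearEquiv.coe_coe]
  rw [← r.eq, TensorProduct.sum_tmul, map_sum, map_sum, map_sum, map_sum]
  refine Finset.sum_congr rfl fun i _ => ?_
  simp [hRep, TensorProduct.leftComm_tmul]

/-- `m ⊗ h ↦ ∑ h₂ ⊗ u(h₁) • m`. -/
def twistQ (u : H →ₗ[k] H) : M ⊗[k] H →ₗ[k] H ⊗[k] M :=
  (LinearMap.lTensor H (TensorProduct.lift ((hRep k H M).toLinearMap ∘ₗ u))) ∘ₗ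
  (TensorProduct.leftComm k H H M).toLinearMap ∘ₗ
  (TensorProduct.assoc k H H M).toLinearMap ∘ₗ
  (LinearMap.rTensor M (Coalgebra.comul (R := k) (A := H))) ∘ₗ
  (TensorProduct.comm k M H).toLinearMap

lemma twistQ_tmul (u : H →ₗ[k] H) (h : H) {ι : Type*} (r : Coalgebra.Repr k h ι) (m : M) :
    twistQ k H M u (m ⊗ₜ[k] h) = ∑ i ∈ r.index, r.right i ⊗ₜ[k] (u (r.left i) • m) := by
  simp only [twistQ, LinearMap.coe_comp, Function.comp_apply, LinearEquiv.coe_coe,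
    TensorProduct.comm_tmul, LinearMap.rTensor_tmul]
  rw [← r.eq, TensorProduct.sum_tmul, map_sum, map_sum, map_sum]
  refine Finset.sum_congr rfl fun i _ => ?_
  simp [hRep, TensorProduct.leftComm_tmul]

/-- The opposite convolution `x ↦ ∑ u(x₂) v(x₁)`. -/
def convOp (u v : H →ₗ[k] H) : H →ₗ[k] H :=
  LinearMap.mul' k H ∘ₗ TensorProduct.map u v ∘ₗ (TensorProduct.comm k H H).toLinearMap ∘ₗ
    Coalgebra.comul

lemma convOp_repr (u v : H →ₗ[k] H) {x : H} {ι : Type*} (r : Coalgebra.Repr k x ι) :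
    convOp k H u v x = ∑ i ∈ r.index, u (r.right i) * v (r.left i) := by
  simp [convOp, ← r.eq, map_sum]

lemma twistQP (u v : H →ₗ[k] H) (hconv : convOp k H u v = (convUnit : H →ₗ[k] H))
    (x : H ⊗[k] M) : twistQ k H M u (twistP k H M v x) = x := by
  induction x using TensorProduct.induction_on with
  | zero => simp
  | add x y hx hy => rw [map_add, map_add, hx, hy]
  | tmul h m =>
    have r := Coalgebra.Repr.arbitrary k h
    have key := Coalgebra.sum_tmul_tmul_eq r (fun i => Coalgebra.Repr.arbitrary k (r.left i))
      (fun i => Coalgebra.Repr.arbitrary k (r.right i))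
    set rL : (i : r.ι) → Coalgebra.Repr k (r.left i) (H × H) :=
      fun i => Coalgebra.Repr.arbitrary k (r.left i)
    set rR : (i : r.ι) → Coalgebra.Repr k (r.right i) (H × H) :=
      fun i => Coalgebra.Repr.arbitrary k (r.right i)
    let δ : H ⊗[k] H →ₗ[k] M :=
      (hRep k H M).toLinearMap.flip m ∘ₗ LinearMap.mul' k H ∘ₗ TensorProduct.map u v ∘ₗ
        (TensorProduct.comm k H H).toLinearMap
    let Λ : H ⊗[k] (H ⊗[k] H) →ₗ[k] H ⊗[k] M :=
      (TensorProduct.comm k M H).toLinearMap ∘ₗ (LinearMap.rTensor H δ) ∘ₗ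
        (TensorProduct.assoc k H H H).symm.toLinearMap
    have key2 := congrArg Λ key
    simp only [map_sum, Λ, δ, LinearMap.coe_comp, Function.comp_apply, LinearEquiv.coe_coe,
      TensorProduct.assoc_symm_tmul, LinearMap.rTensor_tmul, TensorProduct.comm_tmul,
      TensorProduct.map_tmul, LinearMap.mul'_apply, LinearMap.flip_apply,
      AlgHom.toLinearMap_apply] at key2
    calc twistQ k H M u (twistP k H M v (h ⊗ₜ[k] m))
        = ∑ i ∈ r.index, twistQ k H M u ((v (r.left i) • m) ⊗ₜ[k] r.right i) := by
          rw [twistP_tmul k H M v h r, map_sum]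
      _ = ∑ i ∈ r.index, ∑ j ∈ (rR i).index,
            (rR i).right j ⊗ₜ[k] (hRep k H M (u ((rR i).left j) * v (r.left i)) m) := by
          refine Finset.sum_congr rfl fun i _ => ?_
          rw [twistQ_tmul k H M u _ (rR i)]
          refine Finset.sum_congr rfl fun j _ => ?_
          congr 1
          simp [hRep, mul_smul]
      _ = ∑ i ∈ r.index, ∑ j ∈ (rL i).index,
            r.right i ⊗ₜ[k] (hRep k H M (u ((rL i).right j) * v ((rL i).left j)) m) := key2.symm
      _ = ∑ i ∈ r.index, r.right i ⊗ₜ[k] ((convOp k H u v) (r.left i) • m) := by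
          refine Finset.sum_congr rfl fun i _ => ?_
          rw [convOp_repr k H u v (rL i), ← TensorProduct.tmul_sum]
          congr 1
          rw [Finset.sum_smul]
          refine Finset.sum_congr rfl fun j _ => ?_
          simp [hRep, mul_smul]
      _ = h ⊗ₜ[k] m := by
          rw [hconv]
          calc ∑ i ∈ r.index, r.right i ⊗ₜ[k] ((convUnit : H →ₗ[k] H) (r.left i) • m)
              = ∑ i ∈ r.index, (counit (R := k) (r.left i) • r.right i) ⊗ₜ[k] m := by
                refine Finset.sum_congr rfl fun i _ => ?_
                rw [show (convUnit : H →ₗ[k] H) (r.left i) • m =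
                  counit (R := k) (r.left i) • m from by simp [convUnit, algebraMap_smul]]
                exact (TensorProduct.smul_tmul _ _ _).symm
            _ = h ⊗ₜ[k] m := by rw [← TensorProduct.sum_tmul, HopfAux.sum_counit_smul r]

lemma twistPQ (u v : H →ₗ[k] H) (hconv : convOp k H v u = (convUnit : H →ₗ[k] H))
    (x : M ⊗[k] H) : twistP k H M v (twistQ k H M u x) = x := by
  induction x using TensorProduct.induction_on with
  | zero => simp
  | add x y hx hy => rw [map_add, map_add, hx, hy]
  | tmul m h =>
    have r := Coalgebra.Repr.arbitrary k h
    have key := Coalgebra.sum_tmul_tmul_eq r (fun i => Coalgebra.Repr.arbitrary k (r.left i))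
      (fun i => Coalgebra.Repr.arbitrary k (r.right i))
    set rL : (i : r.ι) → Coalgebra.Repr k (r.left i) (H × H) :=
      fun i => Coalgebra.Repr.arbitrary k (r.left i)
    set rR : (i : r.ι) → Coalgebra.Repr k (r.right i) (H × H) :=
      fun i => Coalgebra.Repr.arbitrary k (r.right i)
    let δ : H ⊗[k] H →ₗ[k] M :=
      (hRep k H M).toLinearMap.flip m ∘ₗ LinearMap.mul' k H ∘ₗ TensorProduct.map v u ∘ₗ
        (TensorProduct.comm k H H).toLinearMap
    let Λ : H ⊗[k] (H ⊗[k] H) →ₗ[k] M ⊗[k] H :=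
      (LinearMap.rTensor H δ) ∘ₗ (TensorProduct.assoc k H H H).symm.toLinearMap
    have key2 := congrArg Λ key
    simp only [map_sum, Λ, δ, LinearMap.coe_comp, Function.comp_apply, LinearEquiv.coe_coe,
      TensorProduct.assoc_symm_tmul, LinearMap.rTensor_tmul, TensorProduct.comm_tmul,
      TensorProduct.map_tmul, LinearMap.mul'_apply, LinearMap.flip_apply,
      AlgHom.toLinearMap_apply] at key2
    calc twistP k H M v (twistQ k H M u (m ⊗ₜ[k] h))
        = ∑ i ∈ r.index, twistP k H M v (r.right i ⊗ₜ[k] (u (r.left i) • m)) := by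
          rw [twistQ_tmul k H M u h r, map_sum]
      _ = ∑ i ∈ r.index, ∑ j ∈ (rR i).index,
            (hRep k H M (v ((rR i).left j) * u (r.left i)) m) ⊗ₜ[k] (rR i).right j := by
          refine Finset.sum_congr rfl fun i _ => ?_
          rw [twistP_tmul k H M v _ (rR i)]
          refine Finset.sum_congr rfl fun j _ => ?_
          congr 1
          simp [hRep, mul_smul]
      _ = ∑ i ∈ r.index, ∑ j ∈ (rL i).index,
            (hRep k H M (v ((rL i).right j) * u ((rL i).left j)) m) ⊗ₜ[k] r.right i := key2.symm
      _ = ∑ i ∈ r.index, ((convOp k H v u) (r.left i) • m) ⊗ₜ[k] r.right i := by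
          refine Finset.sum_congr rfl fun i _ => ?_
          rw [convOp_repr k H v u (rL i), ← TensorProduct.sum_tmul]
          congr 1
          rw [Finset.sum_smul]
          refine Finset.sum_congr rfl fun j _ => ?_
          simp [hRep, mul_smul]
      _ = m ⊗ₜ[k] h := by
          rw [hconv]
          calc ∑ i ∈ r.index, ((convUnit : H →ₗ[k] H) (r.left i) • m) ⊗ₜ[k] r.right i
              = ∑ i ∈ r.index, m ⊗ₜ[k] (counit (R := k) (r.left i) • r.right i) := by
                refine Finset.sum_congr rfl fun i _ => ?_
                rw [show (convUnit : H →ₗ[k] H) (r.left i) • m =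
                  counit (R := k) (r.left i) • m from by simp [convUnit, algebraMap_smul]]
                exact TensorProduct.smul_tmul _ _ _
            _ = m ⊗ₜ[k] h := by rw [← TensorProduct.tmul_sum, HopfAux.sum_counit_smul r]

lemma convOp_inv_id (hS : Function.Bijective (antipode (R := k) (A := H))) : convOp k H (invAntipode hS) LinearMap.id = (convUnit : H →ₗ[k] H) := by
  ext x
  have r := Coalgebra.Repr.arbitrary k x
  rw [convOp_repr k H _ _ r]
  simp only [LinearMap.id_coe, id_eq]
  rw [sum_invAntipode_right_mul_left hS r]
  simp [convUnit]

lemma convOp_id_inv (hS : Function.Bijective (antipode (R := k) (A := H))) : convOp k H LinearMap.id (invAntipode hS) = (convUnit : H →ₗ[k] H) := by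
  ext x
  have r := Coalgebra.Repr.arbitrary k x
  rw [convOp_repr k H _ _ r]
  simp only [LinearMap.id_coe, id_eq]
  rw [sum_right_mul_invAntipode_left hS r]
  simp [convUnit]

/-- The `H`-linear untwisting map `(H ⊗ M)_left → (M ⊗ H)_diag`. -/
def untwistHR : (H ⊗[k] M) →ₗ[H] MDiag k H M H :=
  mkHLinear k ((twistP k H M LinearMap.id : H ⊗[k] M →ₗ[k] M ⊗[k] H)) (by
    intro g x
    change twistP k H M LinearMap.id (g • x) = tensorRep k H M H g (twistP k H M LinearMap.id x)
    induction x using TensorProduct.induction_on with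
    | zero => rw [smul_zero, map_zero, map_zero]
    | add x y hx hy => rw [smul_add, map_add, map_add, hx, hy, map_add]
    | tmul h m =>
      have rg := Coalgebra.Repr.arbitrary k g
      have rh := Coalgebra.Repr.arbitrary k h
      rw [show g • (h ⊗ₜ[k] m) = (g * h) ⊗ₜ[k] m from by
        rw [TensorProduct.smul_tmul', smul_eq_mul]]
      rw [twistP_tmul k H M LinearMap.id (g*h) (HopfAux.Repr.mul rg rh) m,
        twistP_tmul k H M LinearMap.id h rh m, map_sum]
      simp only [HopfAux.Repr.mul, Finset.sum_product, LinearMap.id_coe, id_eq]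
      rw [Finset.sum_comm]
      refine Finset.sum_congr rfl fun j _ => ?_
      rw [tensorRep_eq, ← rg.eq]
      simp only [map_sum, LinearMap.coe_sum, Finset.sum_apply]
      refine Finset.sum_congr rfl fun i _ => ?_
      rw [diagAct_tmul, smul_eq_mul, mul_smul])

lemma untwistHR_bij (hS : Function.Bijective (antipode (R := k) (A := H))) :
    Function.Bijective (untwistHR k H M) := by
  have h1 : ∀ x, twistP k H M LinearMap.id (twistQ k H M (invAntipode hS) x) = x :=
    twistPQ k H M _ _ (convOp_id_inv k H hS)
  have h2 : ∀ x, twistQ k H M (invAntipode hS) (twistP k H M LinearMap.id x) = x :=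
    twistQP k H M _ _ (convOp_inv_id k H hS)
  exact Function.bijective_iff_has_inverse.2 ⟨twistQ k H M (invAntipode hS), h2, h1⟩

/-- The untwisting equivalence `(H ⊗ M)_left ≃ (M ⊗ H)_diag`, assuming bijective antipode. -/
def untwistR (hS : Function.Bijective (antipode (R := k) (A := H))) :
    (H ⊗[k] M) ≃ₗ[H] MDiag k H M H :=
  LinearEquiv.ofBijective (untwistHR k H M) (untwistHR_bij k H M hS)

end TwistRight

section ShuffleRight

open Coalgebra HopfAux HopfAlgebra

variable (k : Type u) [CommRing k] (H : Type u) [Ring H] [HopfAlgebra k H]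
variable (M : Type u) [AddCommGroup M] [Module k M] [Module H M]
  [IsScalarTower k H M] [SMulCommClass k H M]
variable (V : Type u) [AddCommGroup V] [Module k V]

lemma shuffleR_smul (h : H) (z : (MDiag k H M H) ⊗[k] V) :
    h • z = ((LinearMap.rTensorHom V).comp (diagAct k H M H)) (comul h) z := by
  induction z using TensorProduct.induction_on with
  | zero => simp; erw [map_zero]; rfl
  | add x y hx hy => rw [smul_add, hx, hy]; exact (map_add _ _ _).symm
  | tmul x v =>
    rw [TensorProduct.smul_tmul', mdiag_hL k H M H h x]
    rfl

lemma shuffleR_comm (a b : H) (m : M) (x : H ⊗[k] V) :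
    ((TensorProduct.assoc k M H V).symm.toLinearMap :
        M ⊗[k] (H ⊗[k] V) →ₗ[k] (MDiag k H M H) ⊗[k] V) ((a • m) ⊗ₜ[k] (b • x)) =
      ((LinearMap.rTensorHom V).comp (diagAct k H M H)) (a ⊗ₜ[k] b)
        (((TensorProduct.assoc k M H V).symm.toLinearMap :
          M ⊗[k] (H ⊗[k] V) →ₗ[k] (MDiag k H M H) ⊗[k] V) (m ⊗ₜ[k] x)) := by
  show (TensorProduct.assoc k M H V).symm ((a • m) ⊗ₜ[k] (b • x)) =
    LinearMap.rTensor V (diagAct k H M H (a ⊗ₜ[k] b))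
      ((TensorProduct.assoc k M H V).symm (m ⊗ₜ[k] x))
  induction x using TensorProduct.induction_on with
  | zero => simp
  | add x y hx hy =>
      rw [smul_add, TensorProduct.tmul_add, map_add, hx, hy, TensorProduct.tmul_add, map_add,
        map_add]
  | tmul h v =>
      rw [show b • (h ⊗ₜ[k] v) = (b * h) ⊗ₜ[k] v from by
        rw [TensorProduct.smul_tmul', smul_eq_mul]]
      rw [TensorProduct.assoc_symm_tmul, TensorProduct.assoc_symm_tmul,
        LinearMap.rTensor_tmul, diagAct_tmul, smul_eq_mul]

/-- The shuffle equivalence `M ⊗ (H ⊗ V) ≃ (M ⊗ H) ⊗ V` as `H`-modules. -/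
def shuffleR : MDiag k H M (H ⊗[k] V) ≃ₗ[H] (MDiag k H M H) ⊗[k] V :=
  LinearEquiv.ofBijective ((mkHLinear k
    (((TensorProduct.assoc k M H V).symm.toLinearMap :
        M ⊗[k] (H ⊗[k] V) →ₗ[k] (MDiag k H M H) ⊗[k] V))
    (hlinear_criterion (Z := (MDiag k H M H) ⊗[k] V) k H
      ((LinearMap.rTensorHom V).comp (diagAct k H M H))
      (shuffleR_smul k H M V) _ (shuffleR_comm k H M V)) :
        MDiag k H M (H ⊗[k] V) →ₗ[H] (MDiag k H M H) ⊗[k] V))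
    ((TensorProduct.assoc k M H V).symm.bijective)

end ShuffleRight

section ProjRight

open Coalgebra HopfAux HopfAlgebra

variable (k : Type u) [Field k] (H : Type u) [Ring H] [HopfAlgebra k H]
variable (M : Type u) [AddCommGroup M] [Module k M] [Module H M]
  [IsScalarTower k H M] [SMulCommClass k H M]
variable (N : Type u) [AddCommGroup N] [Module k N] [Module H N]
  [IsScalarTower k H N] [SMulCommClass k H N]
/-- `M ⊗ (H ⊗ V)_diag` is a projective `H`-module (bijective antipode). -/
lemma projective_mdiag_free_right
    (hS : Function.Bijective (HopfAlgebra.antipode (R := k) (A := H)))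
    (V : Type u) [AddCommGroup V] [Module k V] :
    Module.Projective H (MDiag k H M (H ⊗[k] V)) := by
  have h1 : Module.Projective H ((H ⊗[k] M) ⊗[k] V) := inferInstance
  have e : ((H ⊗[k] M) ⊗[k] V) ≃ₗ[H] MDiag k H M (H ⊗[k] V) :=
    ((TensorProduct.AlgebraTensorModule.congr (untwistR k H M hS) (LinearEquiv.refl k V)).trans
      (shuffleR k H M V).symm)
  exact Module.Projective.of_equiv e

/-- If `N` is projective then so is `M ⊗ N` with the diagonal action (bijective antipode). -/
lemma projective_mdiag_right
    (hS : Function.Bijective (HopfAlgebra.antipode (R := k) (A := H)))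
    (hN : Module.Projective H N) :
    Module.Projective H (MDiag k H M N) := by
  have : Module.Projective H N := hN
  obtain ⟨s, hs⟩ := Module.projective_lifting_property
    (actionMap k H N) (LinearMap.id : N →ₗ[H] N) (actionMap_surjective k H N)
  have hretr : (mapDiagR k H M N (H ⊗[k] N) (actionMap k H N)).comp
      (mapDiagR k H M (H ⊗[k] N) N s) = LinearMap.id := by
    apply LinearMap.ext
    intro x
    induction x using TensorProduct.induction_on with
    | zero => exact (LinearMap.map_zero _).trans (LinearMap.map_zero _).symm
    | add x y hx hy => erw [map_add, map_add, hx, hy]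
    | tmul m n =>
        exact congrArg (fun y : N => (m ⊗ₜ[k] y : M ⊗[k] N)) (LinearMap.congr_fun hs n)
  have hproj : Module.Projective H (MDiag k H M (H ⊗[k] N)) :=
    projective_mdiag_free_right k H M hS N
  exact Module.Projective.of_split (mapDiagR k H M (H ⊗[k] N) N s)
    (mapDiagR k H M N (H ⊗[k] N) (actionMap k H N)) hretr

end ProjRight





section ProjDimMachinery

open Coalgebra HopfAux HopfAlgebra

variable {H : Type u} [Ring H]

lemma projDimLE_congr (n : ℕ) : ∀ {X Y : Type u} [AddCommGroup X] [Module H X]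
    [AddCommGroup Y] [Module H Y], (X ≃ₗ[H] Y) → ProjDimLE H n X → ProjDimLE H n Y := by
  induction n with
  | zero =>
    intro X Y _ _ _ _ e h
    have : Module.Projective H X := h
    exact (Module.Projective.of_equiv e : ProjDimLE H 0 Y)
  | succ n ih =>
    intro X Y _ _ _ _ e h
    rcases (h : Module.Projective H X ∨ _) with h | ⟨P, f, hP, hf, hker⟩
    · have : Module.Projective H X := h
      exact Or.inl (Module.Projective.of_equiv e)
    · refine Or.inr ⟨P, e.toLinearMap ∘ₗ f, hP, fun y => ?_, ?_⟩
      · obtain ⟨p, hp⟩ := hf (e.symm y)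
        exact ⟨p, by simp [hp]⟩
      · have hkeq : LinearMap.ker f = LinearMap.ker (e.toLinearMap ∘ₗ f) := by
          rw [LinearMap.ker_comp, LinearEquiv.ker, Submodule.comap_bot]
        exact ih (LinearEquiv.ofEq _ _ hkeq) hker

end ProjDimMachinery

section KeyInduction

open Coalgebra HopfAux HopfAlgebra

variable (k : Type u) [Field k] (H : Type u) [Ring H] [HopfAlgebra k H]

/-- Restricted `k`-action instances on any `H`-module. -/
theorem restrict_tower (X : Type u) [AddCommGroup X] [Module H X] :
    letI : Module k X := Module.compHom X (algebraMap k H)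
    IsScalarTower k H X := by
  letI : Module k X := Module.compHom X (algebraMap k H)
  refine ⟨fun c h x => ?_⟩
  have e1 : ∀ y : X, c • y = algebraMap k H c • y := fun _ => rfl
  rw [e1, Algebra.smul_def, mul_smul]

theorem restrict_comm (X : Type u) [AddCommGroup X] [Module H X] :
    letI : Module k X := Module.compHom X (algebraMap k H)
    SMulCommClass k H X := by
  letI : Module k X := Module.compHom X (algebraMap k H)
  refine ⟨fun c h x => ?_⟩
  have e1 : ∀ y : X, c • y = algebraMap k H c • y := fun _ => rfl
  rw [e1, e1, ← mul_smul, ← mul_smul, Algebra.commutes]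

variable (N : Type u) [AddCommGroup N] [Module k N] [Module H N]
  [IsScalarTower k H N] [SMulCommClass k H N]
variable (M : Type u) [AddCommGroup M] [Module k M] [Module H M]
  [IsScalarTower k H M] [SMulCommClass k H M]

lemma projDimLE_mdiag_left (n : ℕ) :
    ∀ (M : Type u) [AddCommGroup M] [Module k M] [Module H M] [IsScalarTower k H M]
      [SMulCommClass k H M], ProjDimLE H n M → ProjDimLE H n (MDiag k H M N) := by
  induction n with
  | zero =>
    intro M _ _ _ _ _ h
    exact (projective_mdiag_left k H M N h : ProjDimLE H 0 (MDiag k H M N))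
  | succ n ih =>
    intro M _ _ _ _ _ h
    rcases (h : Module.Projective H M ∨ _) with h | ⟨P, f, hP, hf, hker⟩
    · exact Or.inl (projective_mdiag_left k H M N h)
    · letI : Module k ↑P := Module.compHom ↑P (algebraMap k H)
      haveI : IsScalarTower k H ↑P := restrict_tower k H ↑P
      haveI : SMulCommClass k H ↑P := restrict_comm k H ↑P
      set K : Submodule H ↑P := LinearMap.ker f with hK
      haveI : SMulCommClass k H ↥K :=
        ⟨fun c h x => Subtype.ext (smul_comm c h (x : ↑P))⟩
      refine Or.inr ⟨ModuleCat.of H (MDiag k H ↑P N), mapDiagL k H M N ↑P f, 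
        projective_mdiag_left k H ↑P N hP, ?_, ?_⟩
      · -- surjectivity
        have h1 : Function.Surjective ⇑(LinearMap.rTensor N (kOf k f)) :=
          LinearMap.rTensor_surjective N (g := kOf k f) hf
        exact h1
      · -- kernel
        have hbase : Function.Exact ⇑(kOf k (K.subtype)) ⇑(kOf k f) := by
          rw [LinearMap.exact_iff]
          ext x
          constructor
          · intro hx
            exact ⟨⟨x, hx⟩, rfl⟩
          · rintro ⟨y, rfl⟩
            exact y.2
        have hex : Function.Exact ⇑(LinearMap.rTensor N (kOf k (K.subtype)))
            ⇑(LinearMap.rTensor N (kOf k f)) :=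
          rTensor_exact N hbase hf
        have hinj : Function.Injective ⇑(mapDiagL k H ↑P N ↥K (K.subtype)) := by
          have : Function.Injective ⇑(LinearMap.rTensor N (kOf k (K.subtype))) :=
            Module.Flat.rTensor_preserves_injective_linearMap (M := N) _
              (Submodule.injective_subtype K)
          exact this
        have hrange : LinearMap.range (mapDiagL k H ↑P N ↥K (K.subtype)) =
            LinearMap.ker (mapDiagL k H M N ↑P f) := by
          apply SetLike.ext
          intro x
          rw [LinearMap.mem_range, LinearMap.mem_ker]
          constructor
          · rintro ⟨y, rfl⟩
            exact (hex _).mpr ⟨y, rfl⟩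
          · intro h0
            exact (hex x).mp h0
        have e : MDiag k H ↥K N ≃ₗ[H] ↥(LinearMap.ker (mapDiagL k H M N ↑P f)) :=
          (LinearEquiv.ofInjective _ hinj).trans (LinearEquiv.ofEq _ _ hrange)
        exact projDimLE_congr n e (ih ↥K hker)

lemma projDimLE_mdiag_right
    (hS : Function.Bijective (HopfAlgebra.antipode (R := k) (A := H))) (n : ℕ) :
    ∀ (N : Type u) [AddCommGroup N] [Module k N] [Module H N] [IsScalarTower k H N]
      [SMulCommClass k H N], ProjDimLE H n N → ProjDimLE H n (MDiag k H M N) := by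
  induction n with
  | zero =>
    intro N _ _ _ _ _ h
    exact (projective_mdiag_right k H M N hS h : ProjDimLE H 0 (MDiag k H M N))
  | succ n ih =>
    intro N _ _ _ _ _ h
    rcases (h : Module.Projective H N ∨ _) with h | ⟨P, f, hP, hf, hker⟩
    · exact Or.inl (projective_mdiag_right k H M N hS h)
    · letI : Module k ↑P := Module.compHom ↑P (algebraMap k H)
      haveI : IsScalarTower k H ↑P := restrict_tower k H ↑P
      haveI : SMulCommClass k H ↑P := restrict_comm k H ↑P
      set K : Submodule H ↑P := LinearMap.ker f with hK
      haveI : SMulCommClass k H ↥K :=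
        ⟨fun c h x => Subtype.ext (smul_comm c h (x : ↑P))⟩
      refine Or.inr ⟨ModuleCat.of H (MDiag k H M ↑P), mapDiagR k H M N ↑P f,
        projective_mdiag_right k H M ↑P hS hP, ?_, ?_⟩
      · have h1 : Function.Surjective ⇑(LinearMap.lTensor M (kOf k f)) :=
          LinearMap.lTensor_surjective M (g := kOf k f) hf
        exact h1
      · have hbase : Function.Exact ⇑(kOf k (K.subtype)) ⇑(kOf k f) := by
          rw [LinearMap.exact_iff]
          ext x
          constructor
          · intro hx
            exact ⟨⟨x, hx⟩, rfl⟩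
          · rintro ⟨y, rfl⟩
            exact y.2
        have hex : Function.Exact ⇑(LinearMap.lTensor M (kOf k (K.subtype)))
            ⇑(LinearMap.lTensor M (kOf k f)) :=
          lTensor_exact M hbase hf
        have hinj : Function.Injective ⇑(mapDiagR k H M ↑P ↥K (K.subtype)) := by
          have : Function.Injective ⇑(LinearMap.lTensor M (kOf k (K.subtype))) :=
            Module.Flat.lTensor_preserves_injective_linearMap (M := M) _
              (Submodule.injective_subtype K)
          exact this
        have hrange : LinearMap.range (mapDiagR k H M ↑P ↥K (K.subtype)) =
            LinearMap.ker (mapDiagR k H M N ↑P f) := by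
          apply SetLike.ext
          intro x
          rw [LinearMap.mem_range, LinearMap.mem_ker]
          constructor
          · rintro ⟨y, rfl⟩
            exact (hex _).mpr ⟨y, rfl⟩
          · intro h0
            exact (hex x).mp h0
        have e : MDiag k H M ↥K ≃ₗ[H] ↥(LinearMap.ker (mapDiagR k H M N ↑P f)) :=
          (LinearEquiv.ofInjective _ hinj).trans (LinearEquiv.ofEq _ _ hrange)
        exact projDimLE_congr n e (ih ↥K hker)

end KeyInduction

/-- Let `H` be a Hopf algebra over a field `k`. For left `H`-modules `M`, `N`,
with `M ⊗[k] N` carrying the diagonal `H`-action `h • (m ⊗ n) = ∑ h₁ m ⊗ h₂ n`, we have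
`pd_H(M ⊗ N) ≤ pd_H(M)`; and if the antipode of `H` is bijective, also
`pd_H(M ⊗ N) ≤ pd_H(N)`. -/
theorem projDim_tensor_le (k : Type u) [Field k] (H : Type u) [Ring H] [HopfAlgebra k H]
    (M N : Type u)
    [AddCommGroup M] [Module k M] [Module H M] [IsScalarTower k H M] [SMulCommClass k H M]
    [AddCommGroup N] [Module k N] [Module H N] [IsScalarTower k H N] [SMulCommClass k H N] :
    @projDim H _ (M ⊗[k] N) _ (tensorModule k H M N) ≤ projDim H M ∧
    (Function.Bijective (HopfAlgebra.antipode (R := k) (A := H)) →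
      @projDim H _ (M ⊗[k] N) _ (tensorModule k H M N) ≤ projDim H N) := by
  
  constructor
  · have hsub : {n : ℕ∞ | ∃ m : ℕ, n = (m : ℕ∞) ∧ ProjDimLE H m M} ⊆
        {n : ℕ∞ | ∃ m : ℕ, n = (m : ℕ∞) ∧ ProjDimLE H m (MDiag k H M N)} := by
      rintro x ⟨m, rfl, hm⟩
      exact ⟨m, rfl, projDimLE_mdiag_left k H N m M hm⟩
    exact sInf_le_sInf hsub
  · intro hS
    have hsub : {n : ℕ∞ | ∃ m : ℕ, n = (m : ℕ∞) ∧ ProjDimLE H m N} ⊆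
        {n : ℕ∞ | ∃ m : ℕ, n = (m : ℕ∞) ∧ ProjDimLE H m (MDiag k H M N)} := by
      rintro x ⟨m, rfl, hm⟩
      exact ⟨m, rfl, projDimLE_mdiag_right k H M hS m N hm⟩
    exact sInf_le_sInf hsub
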